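/- Let A : Matrix (Fin m) (Fin n) ℤ with columns a_1, …, a_n and fix a Gale transform G of A. Let i ≠ j in Fin n and let w be a cocircuit of A whose support equals {i, j}. Then: w_i · w_j < 0 if and only if there exist positive integers p, q with p · G(a_i) = q · G(a_j); and w_i · w_j > 0 if and only if there exist positive integers p, q with p · G(a_i) = −q · G(a_j). -/

import Mathlib

/-- The integer kernel of an integer matrix. -/
def kerZ {m n : ℕ} (A : Matrix (Fin m) (Fin n) ℤ) : Set (Fin n → ℤ) :=
  {u | A.mulVec u = 0}

/-- `G` is a Gale transform of `A` (relative to `r`): the columns of `G` lie in the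
integer kernel of `A` and form a `ℤ`-basis of it. The Gale transform of the `i`-th
column `a_i` of `A` is then the `i`-th row `G i` of `G`. -/
def IsGaleTransform {m n r : ℕ} (A : Matrix (Fin m) (Fin n) ℤ)
    (G : Matrix (Fin n) (Fin (n - r)) ℤ) : Prop :=
  (∀ j, (fun i => G i j) ∈ kerZ A) ∧
  ∀ v ∈ kerZ A, ∃! lam : Fin (n - r) → ℤ, v = ∑ j, lam j • (fun i => G i j)

/-- `w` is a covector of `A`. -/
def IsCovector {m n : ℕ} (A : Matrix (Fin m) (Fin n) ℤ) (w : Fin n → ℤ) : Prop :=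
  ∃ v : Fin m → ℤ, w = A.transpose.mulVec v

/-- `w` is a cocircuit of `A`: a nonzero covector of minimal support. -/
def IsCocircuit {m n : ℕ} (A : Matrix (Fin m) (Fin n) ℤ) (w : Fin n → ℤ) : Prop :=
  IsCovector A w ∧ w ≠ 0 ∧
    ∀ w' : Fin n → ℤ, IsCovector A w' → w' ≠ 0 →
      ¬ Function.support w' ⊂ Function.support w

/-- If the rational kernel of a matrix vanishes at coordinate `i`, then the `i`-th
standard basis vector lies in the row space. -/
lemma exists_row_combination {m n : ℕ} (Aq : Matrix (Fin m) (Fin n) ℚ) (i : Fin n)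
    (hQ : ∀ x : Fin n → ℚ, Aq.mulVec x = 0 → x i = 0) :
    ∃ c : Fin m → ℚ, Aq.transpose.mulVec c = Pi.single i 1 := by
  classical
  let L : Fin m → (Fin n → ℚ) →ₗ[ℚ] ℚ := fun s => (LinearMap.proj s).comp Aq.mulVecLin
  let K : (Fin n → ℚ) →ₗ[ℚ] ℚ := LinearMap.proj i
  have hker : ⨅ s, LinearMap.ker (L s) ≤ LinearMap.ker K := by
    intro x hx
    simp only [Submodule.mem_iInf, LinearMap.mem_ker, LinearMap.coe_comp, Function.comp_apply,
      Matrix.mulVecLin_apply, LinearMap.proj_apply, L] at hx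
    exact hQ x (funext hx)
  obtain ⟨c, hc⟩ := (Submodule.mem_span_range_iff_exists_fun ℚ).1 (mem_span_of_iInf_ker_le_ker hker)
  refine ⟨c, funext fun t => ?_⟩
  have h := congrFun (congrArg (fun f : (Fin n → ℚ) →ₗ[ℚ] ℚ => f.toFun) hc) (Pi.single t 1)
  simp only [LinearMap.coe_sum, Finset.sum_apply, LinearMap.smul_apply, LinearMap.coe_comp,
    Function.comp_apply, Matrix.mulVecLin_apply, LinearMap.proj_apply, smul_eq_mul, L, K,
    LinearMap.toFun_eq_coe] at h
  rw [Matrix.mulVec, dotProduct] at *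
  simp only [Matrix.transpose_apply]
  have hsing : (Pi.single i 1 : Fin n → ℚ) t = (Pi.single t 1 : Fin n → ℚ) i := by
    simp [Pi.single_apply, eq_comm]
  rw [hsing, ← h]
  congr 1; funext s
  rw [Matrix.mulVec_single]
  simp [mul_comm]

/-- Clearing denominators of a rational vector. -/
lemma exists_int_multiple {n : ℕ} (x : Fin n → ℚ) :
    ∃ (b : ℤ) (u : Fin n → ℤ), b ≠ 0 ∧ ∀ k, (u k : ℚ) = b * x k := by
  obtain ⟨b, hb⟩ := IsLocalization.exist_integer_multiples_of_finite (nonZeroDivisors ℤ) x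
  choose u hu using hb
  exact ⟨(b : ℤ), u, nonZeroDivisors.coe_ne_zero b, fun k => by
    simpa [Algebra.smul_def, eq_comm] using hu k⟩

theorem cocircuit_pair_sign_iff_gale {m n : ℕ}
    (A : Matrix (Fin m) (Fin n) ℤ) (r : ℕ)
    (hr : r = (A.map (fun x : ℤ => (x : ℚ))).rank)
    (G : Matrix (Fin n) (Fin (n - r)) ℤ) (hG : IsGaleTransform A G)
    (i j : Fin n) (hij : i ≠ j)
    (w : Fin n → ℤ) (hw : IsCocircuit A w)
    (hsupp : Function.support w = ({i, j} : Set (Fin n))) :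
    (w i * w j < 0 ↔ ∃ p q : ℤ, 0 < p ∧ 0 < q ∧ p • G i = q • G j) ∧
    (0 < w i * w j ↔ ∃ p q : ℤ, 0 < p ∧ 0 < q ∧ p • G i = -(q • G j)) := by
  classical
  have hwi : w i ≠ 0 := by
    have : i ∈ Function.support w := by rw [hsupp]; exact Set.mem_insert i {j}
    exact this
  have hwj : w j ≠ 0 := by
    have : j ∈ Function.support w := by
      rw [hsupp]; exact Set.mem_insert_of_mem i rfl
    exact this
  -- Key orthogonality: for each column `l` of `G`, `w i * G i l + w j * G j l = 0`.
  have key : ∀ l, w i * G i l + w j * G j l = 0 := by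
    intro l
    obtain ⟨v, hv⟩ := hw.1
    have hker : A.mulVec (fun k => G k l) = 0 := hG.1 l
    have hdot : ∑ k, w k * G k l = 0 := by
      have : ∑ k, w k * G k l = dotProduct v (A.mulVec (fun k => G k l)) := by
        rw [hv, Matrix.dotProduct_mulVec]
        simp [dotProduct, Matrix.vecMul, Matrix.mulVec, Matrix.transpose_apply, mul_comm]
      rw [this, hker]; simp
    have hres : ∑ k, w k * G k l = w i * G i l + w j * G j l := by
      rw [← Finset.sum_subset (Finset.subset_univ ({i, j} : Finset (Fin n)))]
      · rw [Finset.sum_insert (by simpa using hij), Finset.sum_singleton]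
      · intro x _ hx
        have hwx : w x = 0 := by
          by_contra hcon
          have : x ∈ Function.support w := hcon
          rw [hsupp] at this
          simp only [Finset.mem_insert, Finset.mem_singleton, not_or] at hx
          rcases this with h | h
          · exact hx.1 h
          · exact hx.2 h
        simp [hwx]
    rw [← hres, hdot]
  have key' : (w i) • G i = -((w j) • G j) := by
    funext l
    have := key l
    simp only [Pi.smul_apply, smul_eq_mul, Pi.neg_apply]
    linarith
  -- `G i ≠ 0`.
  have hGi : G i ≠ 0 := by
    intro h0
    -- the integer kernel vanishes at coordinate i
    have hZ : ∀ u ∈ kerZ A, u i = 0 := by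
      intro u hu
      obtain ⟨lam, hlam, -⟩ := hG.2 u hu
      have := congrFun hlam i
      simp only [Finset.sum_apply, Pi.smul_apply, smul_eq_mul] at this
      rw [this]
      apply Finset.sum_eq_zero
      intro l _
      rw [show G i l = 0 from congrFun h0 l]
      ring
    -- the rational kernel vanishes at coordinate i
    set Aq := A.map (fun x : ℤ => (x : ℚ)) with hAq
    have hQ : ∀ x : Fin n → ℚ, Aq.mulVec x = 0 → x i = 0 := by
      intro x hx
      obtain ⟨b, u, hb, hu⟩ := exists_int_multiple x
      have humem : u ∈ kerZ A := by
        funext s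
        have : ((A.mulVec u s : ℤ) : ℚ) = 0 := by
          have e1 : ((A.mulVec u s : ℤ) : ℚ) =
              (Aq.mulVec ((Int.castRingHom ℚ) ∘ u)) s :=
            RingHom.map_mulVec (Int.castRingHom ℚ) A u s
          rw [e1]
          have hcomp : ((Int.castRingHom ℚ) ∘ u) = fun k => (b : ℚ) * x k := by
            funext k; exact hu k
          rw [hcomp]
          have : (fun k => (b : ℚ) * x k) = (b : ℚ) • x := by
            funext k; simp [mul_comm]
          rw [this, Matrix.mulVec_smul, hx]
          simp
        exact_mod_cast this
      have := hZ u humem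
      have hbx : (b : ℚ) * x i = 0 := by rw [← hu i, this]; simp
      rcases mul_eq_zero.1 hbx with h | h
      · exact absurd (by exact_mod_cast h) hb
      · exact h
    obtain ⟨c, hc⟩ := exists_row_combination Aq i hQ
    obtain ⟨b, v, hb, hv⟩ := exists_int_multiple c
    -- the covector `Aᵀ v = b • eᵢ`
    have hw' : A.transpose.mulVec v = fun t => if t = i then b else 0 := by
      funext t
      have : ((A.transpose.mulVec v t : ℤ) : ℚ) = ((if t = i then b else 0 : ℤ) : ℚ) := by
        have e1 : ((A.transpose.mulVec v t : ℤ) : ℚ) =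
            (((A.transpose).map ⇑(Int.castRingHom ℚ)).mulVec ((Int.castRingHom ℚ) ∘ v)) t :=
          RingHom.map_mulVec (Int.castRingHom ℚ) A.transpose v t
        rw [e1]
        have hcomp : ((Int.castRingHom ℚ) ∘ v) = fun k => (b : ℚ) * c k := by
          funext k; exact hv k
        have hmap : (A.transpose).map ⇑(Int.castRingHom ℚ) = Aq.transpose := by
          funext a bb; simp [Aq, Matrix.transpose_apply, Matrix.map_apply]
        rw [hmap, hcomp]
        have : (fun k => (b : ℚ) * c k) = (b : ℚ) • c := by
          funext k; simp [mul_comm]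
        rw [this, Matrix.mulVec_smul, hc]
        simp [Pi.single_apply]
      exact_mod_cast this
    have hcov : IsCovector A (fun t => if t = i then b else 0) := ⟨v, hw'.symm⟩
    have hne : (fun t => if t = i then b else 0) ≠ 0 := by
      intro hcon
      have := congrFun hcon i
      simp at this
      exact hb this
    have hsub : Function.support (fun t => if t = i then b else 0) ⊂ Function.support w := by
      rw [hsupp]
      constructor
      · intro t ht
        simp only [Function.mem_support, ne_eq, ite_eq_right_iff, not_forall] at ht
        obtain ⟨ht, -⟩ := ht
        subst ht
        exact Set.mem_insert t {j}
      · intro hcon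
        have : j ∈ Function.support (fun t => if t = i then b else 0) :=
          hcon (Set.mem_insert_of_mem i rfl)
        simp only [Function.mem_support, ne_eq, ite_eq_right_iff, not_forall] at this
        exact hij this.1.symm
    exact hw.2.2 _ hcov hne hsub
  obtain ⟨l0, hl0⟩ : ∃ l, G i l ≠ 0 := by
    by_contra hcon
    push_neg at hcon
    exact hGi (funext hcon)
  have hprod : w i * w j ≠ 0 := mul_ne_zero hwi hwj
  constructor
  · constructor
    · intro h
      rcases lt_trichotomy (w i) 0 with h1 | h1 | h1
      · have h2 : 0 < w j := by nlinarith
        exact ⟨-(w i), w j, by linarith, h2, by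
          funext l
          have := key l
          simp only [Pi.smul_apply, smul_eq_mul]
          linarith [mul_comm (w i) (G i l)]⟩
      · exact absurd h1 hwi
      · have h2 : w j < 0 := by nlinarith
        exact ⟨w i, -(w j), h1, by linarith, by
          funext l
          have := key l
          simp only [Pi.smul_apply, smul_eq_mul]
          linarith⟩
    · rintro ⟨p, q, hp, hq, hpq⟩
      rcases hprod.lt_or_gt with h | h
      · exact h
      · exfalso
        have hzero : (q * w i + p * w j) * G i l0 = 0 := by
          have h1 := congrFun key' l0
          have h2 := congrFun hpq l0
          simp only [Pi.smul_apply, smul_eq_mul, Pi.neg_apply] at h1 h2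
          linear_combination q * h1 + w j * h2
        have : q * w i + p * w j = 0 := by
          rcases mul_eq_zero.1 hzero with h' | h'
          · exact h'
          · exact absurd h' hl0
        rcases lt_trichotomy (w i) 0 with h1 | h1 | h1
        · have h2 : w j < 0 := by nlinarith
          nlinarith
        · exact hwi h1
        · have h2 : 0 < w j := by nlinarith
          nlinarith
  · constructor
    · intro h
      rcases lt_trichotomy (w i) 0 with h1 | h1 | h1
      · have h2 : w j < 0 := by nlinarith
        exact ⟨-(w i), -(w j), by linarith, by linarith, by
          funext l
          have := key l
          simp only [Pi.smul_apply, smul_eq_mul, Pi.neg_apply]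
          linarith⟩
      · exact absurd h1 hwi
      · have h2 : 0 < w j := by nlinarith
        exact ⟨w i, w j, h1, h2, by
          funext l
          have := key l
          simp only [Pi.smul_apply, smul_eq_mul, Pi.neg_apply]
          linarith⟩
    · rintro ⟨p, q, hp, hq, hpq⟩
      rcases hprod.lt_or_gt with h | h
      · exfalso
        have hzero : (q * w i - p * w j) * G i l0 = 0 := by
          have h1 := congrFun key' l0
          have h2 := congrFun hpq l0
          simp only [Pi.smul_apply, smul_eq_mul, Pi.neg_apply] at h1 h2
          linear_combination q * h1 - w j * h2
        have : q * w i - p * w j = 0 := by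
          rcases mul_eq_zero.1 hzero with h' | h'
          · exact h'
          · exact absurd h' hl0
        rcases lt_trichotomy (w i) 0 with h1 | h1 | h1
        · have h2 : 0 < w j := by nlinarith
          nlinarith
        · exact hwi h1
        · have h2 : w j < 0 := by nlinarith
          nlinarith
      · exact h
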